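/- Consider the two-room worker-proposing Deferred Acceptance algorithm for instances A and B where all workers except w1 have identical lists in A and B: workers propose in both rooms according to the room's instance, each worker maintains a single crossed-off set updated by rejections from either room. If the algorithm terminates with perfect matchings μ_A in room A and μ_B in room B, then μ_A = μ_B. -/
import Mathlib


/-- A stable matching instance: each worker `w` ranks firms via `wr w` (lower rank =
more preferred, rank = position in the preference list) and each firm `f` ranks
workers via `fr f`. -/
structure SMInstance (W F : Type) where
  wr : W → F → ℕ
  fr : F → W → ℕ
  wr_inj : ∀ w, Function.Injective (wr w)
  fr_inj : ∀ f, Function.Injective (fr f)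

variable {W F : Type}

/-- `(w, f)` is a blocking pair for the matching `M` under instance `A`. -/
def SMInstance.Blocking (A : SMInstance W F) (M : W ≃ F) (w : W) (f : F) : Prop :=
  M w ≠ f ∧ A.wr w f < A.wr w (M w) ∧ A.fr f w < A.fr f (M.symm f)

/-- `M` is stable under `A`: it has no blocking pair. -/
def SMInstance.Stable (A : SMInstance W F) (M : W ≃ F) : Prop :=
  ∀ w f, ¬ A.Blocking M w f

/-- Pointwise "less preferred partner" (join) of two matchings, w.r.t. the worker
preferences of `A`. -/
def worse (A : SMInstance W F) (M1 M2 : W ≃ F) (w : W) : F :=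
  if A.wr w (M1 w) ≤ A.wr w (M2 w) then M2 w else M1 w

/-- Pointwise "more preferred partner" (meet) of two matchings, w.r.t. the worker
preferences of `A`. -/
def better (A : SMInstance W F) (M1 M2 : W ≃ F) (w : W) : F :=
  if A.wr w (M1 w) ≤ A.wr w (M2 w) then M1 w else M2 w

/-- The two-room worker-proposing Deferred Acceptance algorithm for instances `A`
and `B`, where all workers except `w1` have identical lists in `A` and `B`: each
worker maintains one crossed-off set (shared across rooms, updated by rejections
from either room) and proposes in each room to its best uncrossed firm for that
room's instance.  If the algorithm terminates at round `T` (no rejections) with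
perfect matchings `μA` in room `A` and `μB` in room `B`, then `μA = μB`. -/
theorem stmt16 (A B : SMInstance W F) (w1 : W)
    (hW : ∀ w, w ≠ w1 → A.wr w = B.wr w)
    (crossed : ℕ → W → Set F) (propA propB : ℕ → W → F)
    (h0 : ∀ w, crossed 0 w = ∅)
    (hbestA : ∀ t w, propA t w ∉ crossed t w ∧
      ∀ f, f ∉ crossed t w → A.wr w (propA t w) ≤ A.wr w f)
    (hbestB : ∀ t w, propB t w ∉ crossed t w ∧
      ∀ f, f ∉ crossed t w → B.wr w (propB t w) ≤ B.wr w f)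
    (hstep : ∀ t w, crossed (t + 1) w = crossed t w ∪
      ({f | propA t w = f ∧ ∃ w', propA t w' = f ∧ A.fr f w' < A.fr f w} ∪
       {f | propB t w = f ∧ ∃ w', propB t w' = f ∧ B.fr f w' < B.fr f w}))
    (T : ℕ) (hstop : ∀ w, crossed (T + 1) w = crossed T w)
    (μA μB : W ≃ F) (hμA : ∀ w, μA w = propA T w) (hμB : ∀ w, μB w = propB T w) :
    μA = μB := by
  have key : ∀ w, w ≠ w1 → μA w = μB w := by
    intro w hw
    rw [hμA, hμB]
    apply A.wr_inj w
    have h1 := (hbestA T w).2 _ (hbestB T w).1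
    have h2 := (hbestB T w).2 _ (hbestA T w).1
    rw [← hW w hw] at h2
    exact le_antisymm h1 h2
  apply Equiv.ext
  intro w
  by_cases hw : w = w1
  · subst hw
    set w' := μB.symm (μA w) with hw'def
    have hB : μB w' = μA w := μB.apply_symm_apply _
    by_cases hw' : w' = w
    · rw [← hB, hw']
    · exact absurd (μA.injective ((key w' hw').trans hB)) hw'
  · exact key w hw
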